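/- Assume the stationary Nash equilibrium p** lies in P² = [p̲, p̄]². Then for every ε > 0 there exists M > 0 such that every p ∈ P² with ε(p) ≥ ε satisfies 𝒢(p) ≥ M, where ε(p) = |p_H** − p_H|/(b_H + c_H) + |p_L** − p_L|/(b_L + c_L). -/

import Mathlib

open Real Filter

/-- Deterministic utility u_i(p_i, r_i) = a_i - b_i * p_i + c_i * (r_i - p_i). -/
noncomputable def util (a b c pi ri : ℝ) : ℝ := a - b * pi + c * (ri - pi)

/-- MNL demand of product H. -/
noncomputable def demH (aH aL bH bL cH cL : ℝ) (p r : ℝ × ℝ) : ℝ :=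
  Real.exp (util aH bH cH p.1 r.1) /
    (1 + Real.exp (util aH bH cH p.1 r.1) + Real.exp (util aL bL cL p.2 r.2))

/-- MNL demand of product L. -/
noncomputable def demL (aH aL bH bL cH cL : ℝ) (p r : ℝ × ℝ) : ℝ :=
  Real.exp (util aL bL cL p.2 r.2) /
    (1 + Real.exp (util aH bH cH p.1 r.1) + Real.exp (util aL bL cL p.2 r.2))

/-- Scaled derivative of the log-revenue of firm H. -/
noncomputable def GrH (aH aL bH bL cH cL : ℝ) (p r : ℝ × ℝ) : ℝ :=
  1 / ((bH + cH) * p.1) + demH aH aL bH bL cH cL p r - 1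

/-- Scaled derivative of the log-revenue of firm L. -/
noncomputable def GrL (aH aL bH bL cH cL : ℝ) (p r : ℝ × ℝ) : ℝ :=
  1 / ((bL + cL) * p.2) + demL aH aL bH bL cH cL p r - 1

/-- Stationary Nash equilibrium: positive price vector on which both scaled
derivatives vanish at price = reference price. -/
def IsSNE (aH aL bH bL cH cL : ℝ) (p : ℝ × ℝ) : Prop :=
  0 < p.1 ∧ 0 < p.2 ∧ GrH aH aL bH bL cH cL p p = 0 ∧ GrL aH aL bH bL cH cL p p = 0

/-- Projection onto the interval [lo, hi]. -/
noncomputable def proj (lo hi x : ℝ) : ℝ := min (max x lo) hi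

/-- Membership of a price vector in P² = [lo, hi]². -/
def InP2 (lo hi : ℝ) (x : ℝ × ℝ) : Prop := x.1 ∈ Set.Icc lo hi ∧ x.2 ∈ Set.Icc lo hi

/-- Squared Euclidean norm on ℝ². -/
noncomputable def norm2sq (x : ℝ × ℝ) : ℝ := x.1 ^ 2 + x.2 ^ 2

/-- The OPGA dynamics for price path `pp` and reference-price path `rr`. -/
def OPGA (aH aL bH bL cH cL lo hi alpha : ℝ) (eta : ℕ → ℝ) (pp rr : ℕ → ℝ × ℝ) : Prop :=
  (∀ t, (pp (t+1)).1 =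
      proj lo hi ((pp t).1 + eta t * (bH + cH) * GrH aH aL bH bL cH cL (pp t) (rr t))) ∧
  (∀ t, (pp (t+1)).2 =
      proj lo hi ((pp t).2 + eta t * (bL + cL) * GrL aH aL bH bL cH cL (pp t) (rr t))) ∧
  (∀ t, (rr (t+1)).1 = alpha * (rr t).1 + (1 - alpha) * (pp t).1) ∧
  (∀ t, (rr (t+1)).2 = alpha * (rr t).2 + (1 - alpha) * (pp t).2)

/-- The weighted ℓ¹ distance to the SNE. -/
noncomputable def wdist (bH bL cH cL : ℝ) (pstar p : ℝ × ℝ) : ℝ :=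
  |pstar.1 - p.1| / (bH + cH) + |pstar.2 - p.2| / (bL + cL)

/-- The function 𝒢(p) = sign(p_H** − p_H)·G_H(p,p) + sign(p_L** − p_L)·G_L(p,p). -/
noncomputable def calG (aH aL bH bL cH cL : ℝ) (pstar p : ℝ × ℝ) : ℝ :=
  Real.sign (pstar.1 - p.1) * GrH aH aL bH bL cH cL p p +
  Real.sign (pstar.2 - p.2) * GrL aH aL bH bL cH cL p p

/-- The function ℋ(p) used in the local analysis around the SNE. -/
noncomputable def calH (aH aL bH bL cH cL : ℝ) (pstar p : ℝ × ℝ) : ℝ :=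
  (bH + cH) * GrH aH aL bH bL cH cL p p * (pstar.1 - p.1) +
  (bL + cL) * GrL aH aL bH bL cH cL p p * (pstar.2 - p.2)

/-- The constant M_G bounding |G_i| on P². -/
noncomputable def MG (bH bL cH cL lo : ℝ) : ℝ :=
  max (1 / ((bH + cH) * lo)) (1 / ((bL + cL) * lo)) + 1

/-- The Lipschitz constant l_r = (1/4)·√(c_H² + c_L²). -/
noncomputable def lr (cH cL : ℝ) : ℝ := (1 / 4) * Real.sqrt (cH ^ 2 + cL ^ 2)

lemma halfidH (s d e b b' k x A B : ℝ) (hk : (0:ℝ) < k) (hx : (0:ℝ) < x)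
    (hS : (0:ℝ) < 1 + A + B) :
    s * (-(k * d) / (k * x) ^ 2 +
      (A * -(b * d) * (1 + A + B) - A * (A * -(b * d) + B * -(b' * e))) / (1 + A + B) ^ 2) =
    (s * -d) / (k * x ^ 2) +
      ((s * -d) * b * A * (1 + B) + (s * e) * b' * A * B) / (1 + A + B) ^ 2 := by
  have hk' : k ≠ 0 := ne_of_gt hk
  have hx' : x ≠ 0 := ne_of_gt hx
  have hS' : (1 + A + B) ≠ 0 := ne_of_gt hS
  field_simp
  ring

lemma halfidL (s d e b b' k y A B : ℝ) (hk : (0:ℝ) < k) (hy : (0:ℝ) < y)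
    (hS : (0:ℝ) < 1 + A + B) :
    s * (-(k * d) / (k * y) ^ 2 +
      (B * -(b * d) * (1 + A + B) - B * (A * -(b' * e) + B * -(b * d))) / (1 + A + B) ^ 2) =
    (s * -d) / (k * y ^ 2) +
      ((s * -d) * b * B * (1 + A) + (s * e) * b' * A * B) / (1 + A + B) ^ 2 := by
  have hk' : k ≠ 0 := ne_of_gt hk
  have hy' : y ≠ 0 := ne_of_gt hy
  have hS' : (1 + A + B) ≠ 0 := ne_of_gt hS
  field_simp
  ring

lemma sgn_mul_self (a : ℝ) : Real.sign a * a = |a| := by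
  rcases lt_trichotomy a 0 with h|h|h
  · rw [Real.sign_of_neg h, abs_of_neg h]; ring
  · simp [h]
  · rw [Real.sign_of_pos h, abs_of_pos h]; ring

lemma abs_sgn_le (a : ℝ) : |Real.sign a| ≤ 1 := by
  rcases lt_trichotomy a 0 with h|h|h
  · rw [Real.sign_of_neg h]; norm_num
  · simp [h]
  · rw [Real.sign_of_pos h]; norm_num


set_option maxHeartbeats 2000000 in
theorem calG_lower_bound (aH aL bH bL cH cL : ℝ)
    (hbH : 0 < bH) (hbL : 0 < bL) (hcH : 0 < cH) (hcL : 0 < cL)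
    (lo hi : ℝ) (hlo : 0 < lo) (hlohi : lo ≤ hi)
    (pstar : ℝ × ℝ) (hsne : IsSNE aH aL bH bL cH cL pstar)
    (hstar : InP2 lo hi pstar) :
    ∀ eps > (0 : ℝ), ∃ M > (0 : ℝ), ∀ p : ℝ × ℝ, InP2 lo hi p →
      eps ≤ wdist bH bL cH cL pstar p → M ≤ calG aH aL bH bL cH cL pstar p := by
  intro eps heps
  have hhi : (0:ℝ) < hi := lt_of_lt_of_le hlo hlohi
  have hkH : (0:ℝ) < bH + cH := by linarith
  have hkL : (0:ℝ) < bL + cL := by linarith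
  refine ⟨eps / hi ^ 2, by positivity, ?_⟩
  intro p hp hwd
  obtain ⟨⟨hp1l, hp1u⟩, ⟨hp2l, hp2u⟩⟩ := hp
  obtain ⟨⟨hq1l, hq1u⟩, ⟨hq2l, hq2u⟩⟩ := hstar
  set dH : ℝ := p.1 - pstar.1 with hdH
  set dL : ℝ := p.2 - pstar.2 with hdL
  set sH : ℝ := Real.sign (pstar.1 - p.1) with hsH
  set sL : ℝ := Real.sign (pstar.2 - p.2) with hsL
  -- path coordinates
  set X : ℝ → ℝ := fun t => pstar.1 + t * dH with hXdef
  set Y : ℝ → ℝ := fun t => pstar.2 + t * dL with hYdef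
  have hXbox : ∀ t ∈ Set.Icc (0:ℝ) 1, lo ≤ X t ∧ X t ≤ hi := by
    intro t ⟨ht0, ht1⟩
    constructor <;> simp only [hXdef, hdH] <;> nlinarith
  have hYbox : ∀ t ∈ Set.Icc (0:ℝ) 1, lo ≤ Y t ∧ Y t ≤ hi := by
    intro t ⟨ht0, ht1⟩
    constructor <;> simp only [hYdef, hdL] <;> nlinarith
  -- the function along the path and its derivative
  set g : ℝ → ℝ := fun t =>
    sH * (1 / ((bH + cH) * X t) + Real.exp (aH - bH * X t) /
        (1 + Real.exp (aH - bH * X t) + Real.exp (aL - bL * Y t)) - 1) +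
    sL * (1 / ((bL + cL) * Y t) + Real.exp (aL - bL * Y t) /
        (1 + Real.exp (aH - bH * X t) + Real.exp (aL - bL * Y t)) - 1) with hgdef
  set g' : ℝ → ℝ := fun t =>
    sH * (-((bH + cH) * dH) / ((bH + cH) * X t) ^ 2 +
      ((Real.exp (aH - bH * X t) * -(bH * dH)) *
          (1 + Real.exp (aH - bH * X t) + Real.exp (aL - bL * Y t)) -
        Real.exp (aH - bH * X t) *
          (Real.exp (aH - bH * X t) * -(bH * dH) + Real.exp (aL - bL * Y t) * -(bL * dL))) /
        (1 + Real.exp (aH - bH * X t) + Real.exp (aL - bL * Y t)) ^ 2) +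
    sL * (-((bL + cL) * dL) / ((bL + cL) * Y t) ^ 2 +
      ((Real.exp (aL - bL * Y t) * -(bL * dL)) *
          (1 + Real.exp (aH - bH * X t) + Real.exp (aL - bL * Y t)) -
        Real.exp (aL - bL * Y t) *
          (Real.exp (aH - bH * X t) * -(bH * dH) + Real.exp (aL - bL * Y t) * -(bL * dL))) /
        (1 + Real.exp (aH - bH * X t) + Real.exp (aL - bL * Y t)) ^ 2) with hg'def
  have hderiv : ∀ t ∈ Set.Icc (0:ℝ) 1, HasDerivAt g (g' t) t := by
    intro t ht
    have hXt : 0 < X t := lt_of_lt_of_le hlo (hXbox t ht).1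
    have hYt : 0 < Y t := lt_of_lt_of_le hlo (hYbox t ht).1
    have hXd : HasDerivAt X dH t := (hasDerivAt_mul_const dH).const_add pstar.1
    have hYd : HasDerivAt Y dL t := (hasDerivAt_mul_const dL).const_add pstar.2
    have hA : HasDerivAt (fun t => Real.exp (aH - bH * X t))
        (Real.exp (aH - bH * X t) * -(bH * dH)) t :=
      ((hXd.const_mul bH).const_sub aH).exp
    have hB : HasDerivAt (fun t => Real.exp (aL - bL * Y t))
        (Real.exp (aL - bL * Y t) * -(bL * dL)) t :=
      ((hYd.const_mul bL).const_sub aL).exp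
    have hS : HasDerivAt (fun t => 1 + Real.exp (aH - bH * X t) + Real.exp (aL - bL * Y t))
        (Real.exp (aH - bH * X t) * -(bH * dH) + Real.exp (aL - bL * Y t) * -(bL * dL)) t :=
      ((hA.const_add 1).add hB)
    have hSne : (1 + Real.exp (aH - bH * X t) + Real.exp (aL - bL * Y t)) ≠ 0 := by
      positivity
    have hinvH : HasDerivAt (fun t => 1 / ((bH + cH) * X t))
        (-((bH + cH) * dH) / ((bH + cH) * X t) ^ 2) t := by
      have := (hXd.const_mul (bH + cH)).inv (by positivity)
      simpa [one_div, Pi.inv_def] using this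
    have hinvL : HasDerivAt (fun t => 1 / ((bL + cL) * Y t))
        (-((bL + cL) * dL) / ((bL + cL) * Y t) ^ 2) t := by
      have := (hYd.const_mul (bL + cL)).inv (by positivity)
      simpa [one_div, Pi.inv_def] using this
    have hdivH := hA.div hS hSne
    have hdivL := hB.div hS hSne
    exact (((hinvH.add hdivH).sub_const 1).const_mul sH).add
      (((hinvL.add hdivL).sub_const 1).const_mul sL)
  have hcont : ContinuousOn g (Set.Icc (0:ℝ) 1) :=
    fun t ht => (hderiv t ht).continuousAt.continuousWithinAt
  obtain ⟨c, hc, hceq⟩ := exists_hasDerivAt_eq_slope g g' one_pos hcont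
    (fun t ht => hderiv t ⟨le_of_lt ht.1, le_of_lt ht.2⟩)
  -- endpoint values
  have hg0 : g 0 = 0 := by
    have h1 := hsne.2.2.1
    have h2 := hsne.2.2.2
    simp only [GrH, GrL, demH, demL, util] at h1 h2
    have e1 : aH - bH * pstar.1 + cH * (pstar.1 - pstar.1) = aH - bH * pstar.1 := by ring
    have e2 : aL - bL * pstar.2 + cL * (pstar.2 - pstar.2) = aL - bL * pstar.2 := by ring
    rw [e1, e2] at h1 h2
    have eX : X 0 = pstar.1 := by simp [hXdef]
    have eY : Y 0 = pstar.2 := by simp [hYdef]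
    simp only [hgdef, eX, eY]
    rw [h1, h2]; ring
  have hg1 : g 1 = calG aH aL bH bL cH cL pstar p := by
    have eX : X 1 = p.1 := by simp [hXdef, hdH]
    have eY : Y 1 = p.2 := by simp [hYdef, hdL]
    simp only [hgdef, eX, eY, calG, GrH, GrL, demH, demL, util, hsH, hsL]
    have e1 : aH - bH * p.1 + cH * (p.1 - p.1) = aH - bH * p.1 := by ring
    have e2 : aL - bL * p.2 + cL * (p.2 - p.2) = aL - bL * p.2 := by ring
    rw [e1, e2]
  -- now the lower bound on g' c
  have hcIcc : c ∈ Set.Icc (0:ℝ) 1 := ⟨le_of_lt hc.1, le_of_lt hc.2⟩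
  have hXc := hXbox c hcIcc
  have hYc := hYbox c hcIcc
  have hx0 : 0 < X c := lt_of_lt_of_le hlo hXc.1
  have hy0 : 0 < Y c := lt_of_lt_of_le hlo hYc.1
  set A : ℝ := Real.exp (aH - bH * X c) with hAdef
  set B : ℝ := Real.exp (aL - bL * Y c) with hBdef
  have hApos : 0 < A := Real.exp_pos _
  have hBpos : 0 < B := Real.exp_pos _
  have hSpos : 0 < 1 + A + B := by linarith
  -- sign facts
  have hsHdH : sH * -dH = |dH| := by
    have : pstar.1 - p.1 = -dH := by rw [hdH]; ring
    rw [hsH, this, sgn_mul_self, abs_neg]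
  have hsLdL : sL * -dL = |dL| := by
    have : pstar.2 - p.2 = -dL := by rw [hdL]; ring
    rw [hsL, this, sgn_mul_self, abs_neg]
  have hsHb : -|dL| ≤ sH * dL := by
    have h1 : |sH * dL| ≤ |dL| := by
      rw [abs_mul]
      nlinarith [abs_sgn_le (pstar.1 - p.1), abs_nonneg dL]
    linarith [neg_abs_le (sH * dL)]
  have hsLb : -|dH| ≤ sL * dH := by
    have h1 : |sL * dH| ≤ |dH| := by
      rw [abs_mul]
      nlinarith [abs_sgn_le (pstar.2 - p.2), abs_nonneg dH]
    linarith [neg_abs_le (sL * dH)]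
  -- identity for g' c
  have hid : g' c = (sH * -dH) / ((bH + cH) * (X c) ^ 2) + (sL * -dL) / ((bL + cL) * (Y c) ^ 2) +
      ((sH * -dH) * bH * A * (1 + B) + (sH * dL) * bL * A * B +
       (sL * -dL) * bL * B * (1 + A) + (sL * dH) * bH * A * B) / (1 + A + B) ^ 2 := by
    simp only [hg'def, ← hAdef, ← hBdef]
    rw [halfidH sH dH dL bH bL (bH + cH) (X c) A B hkH hx0 hSpos,
        halfidL sL dL dH bL bH (bL + cL) (Y c) A B hkL hy0 hSpos]
    ring
  rw [hsHdH, hsLdL] at hid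
  -- bound
  have hbr : 0 ≤ (|dH| * bH * A * (1 + B) + (sH * dL) * bL * A * B +
       |dL| * bL * B * (1 + A) + (sL * dH) * bH * A * B) / (1 + A + B) ^ 2 := by
    apply div_nonneg _ (sq_nonneg _)
    nlinarith [mul_nonneg (mul_nonneg (mul_nonneg (by linarith : (0:ℝ) ≤ sH * dL + |dL|) hbL.le) hApos.le) hBpos.le,
      mul_nonneg (mul_nonneg (mul_nonneg (by linarith : (0:ℝ) ≤ sL * dH + |dH|) hbH.le) hApos.le) hBpos.le,
      mul_nonneg (mul_nonneg (abs_nonneg dH) hbH.le) hApos.le,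
      mul_nonneg (mul_nonneg (abs_nonneg dL) hbL.le) hBpos.le,
      mul_nonneg (mul_nonneg (mul_nonneg (abs_nonneg dH) hbH.le) hApos.le) hBpos.le,
      mul_nonneg (mul_nonneg (mul_nonneg (abs_nonneg dL) hbL.le) hApos.le) hBpos.le]
  have hwd' : eps ≤ |dH| / (bH + cH) + |dL| / (bL + cL) := by
    have e1 : |pstar.1 - p.1| = |dH| := by rw [hdH, abs_sub_comm]
    have e2 : |pstar.2 - p.2| = |dL| := by rw [hdL, abs_sub_comm]
    simpa [wdist, e1, e2] using hwd
  have hmain : eps / hi ^ 2 ≤ g' c := by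
    rw [hid]
    have h1 : eps / hi ^ 2 ≤ (|dH| / (bH + cH) + |dL| / (bL + cL)) / hi ^ 2 := by
      gcongr
    have h2 : (|dH| / (bH + cH) + |dL| / (bL + cL)) / hi ^ 2 =
        |dH| / ((bH + cH) * hi ^ 2) + |dL| / ((bL + cL) * hi ^ 2) := by
      field_simp
    have h3 : |dH| / ((bH + cH) * hi ^ 2) ≤ |dH| / ((bH + cH) * (X c) ^ 2) := by
      gcongr
      exact hXc.2
    have h4 : |dL| / ((bL + cL) * hi ^ 2) ≤ |dL| / ((bL + cL) * (Y c) ^ 2) := by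
      gcongr
      exact hYc.2
    linarith
  have : g' c = calG aH aL bH bL cH cL pstar p := by
    rw [hceq, hg0, hg1]; ring
  rw [this] at hmain
  exact hmain
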